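/- Let ψ: B_N → ℂ and φ = (φ_1,…,φ_N): B_N → B_N be holomorphic with ψ(0) ≠ 0, and suppose the identity (★) holds: ψ(z)·(1 − log(1 − Σ_j φ_j(z)·w_j)) = ψ(w)·(1 − log(1 − Σ_j z_j·φ_j(w))) for all z,w ∈ B_N. Then for every z ∈ B_N one has ψ(z) = ψ(0)·(1 − log(1 − Σ_k z_k·φ_k(0))), and for every k = 1,…,N one has φ_k(z) = φ_k(0) + (Σ_j (∂φ_j/∂z_k)(0)·z_j) / ((1 − Σ_m z_m·φ_m(0))·(1 − log(1 − Σ_m z_m·φ_m(0)))). -/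

import Mathlib

open ComplexConjugate

/-- The open unit ball of `ℂ^N` (Euclidean norm). -/
def unitBall (N : ℕ) : Set (Fin N → ℂ) := {z | ∑ j, ‖z j‖ ^ 2 < 1}

/-- The Jacobian matrix `φ'(0)`, with `(i, j)` entry `(∂φ_i/∂z_j)(0)`. -/
noncomputable def jac0 (N : ℕ) (φ : (Fin N → ℂ) → Fin N → ℂ) :
    Matrix (Fin N) (Fin N) ℂ :=
  Matrix.of fun i j => fderiv ℂ φ 0 (Pi.single j 1) i

noncomputable def linMap (N : ℕ) (c : Fin N → ℂ) : (Fin N → ℂ) →L[ℂ] ℂ :=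
  ∑ j, c j • (ContinuousLinearMap.proj j)

lemma linMap_apply (N : ℕ) (c v : Fin N → ℂ) : linMap N c v = ∑ j, c j * v j := by
  simp [linMap]

lemma hasFDerivAt_linSum (N : ℕ) (c : Fin N → ℂ) (x : Fin N → ℂ) :
    HasFDerivAt (fun w : Fin N → ℂ => ∑ j, c j * w j) (linMap N c) x :=
  ((linMap N c).hasFDerivAt).congr_of_eventuallyEq
    (Filter.Eventually.of_forall fun w => (linMap_apply N c w).symm)

lemma isOpen_unitBall (N : ℕ) : IsOpen (unitBall N) := by
  have : Continuous fun z : Fin N → ℂ => ∑ j, ‖z j‖ ^ 2 := by fun_prop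
  exact isOpen_lt this continuous_const

lemma zero_mem_unitBall (N : ℕ) : (0 : Fin N → ℂ) ∈ unitBall N := by
  simp [unitBall]

lemma pair_norm_lt (N : ℕ) {z w : Fin N → ℂ} (hz : z ∈ unitBall N) (hw : w ∈ unitBall N) :
    ‖∑ j, z j * w j‖ < 1 := by
  have h1 : ‖∑ j, z j * w j‖ ≤ ∑ j, ‖z j‖ * ‖w j‖ := by
    refine le_trans (norm_sum_le _ _) (le_of_eq ?_)
    simp [norm_mul]
  have h2 : (∑ j, ‖z j‖ * ‖w j‖) ^ 2 ≤ (∑ j, ‖z j‖ ^ 2) * ∑ j, ‖w j‖ ^ 2 :=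
    Finset.sum_mul_sq_le_sq_mul_sq _ _ _
  have hS : (0:ℝ) ≤ ∑ j, ‖z j‖ * ‖w j‖ :=
    Finset.sum_nonneg fun j _ => mul_nonneg (norm_nonneg _) (norm_nonneg _)
  have hA : (0:ℝ) ≤ ∑ j, ‖z j‖ ^ 2 := Finset.sum_nonneg fun j _ => sq_nonneg _
  have hB : (0:ℝ) ≤ ∑ j, ‖w j‖ ^ 2 := Finset.sum_nonneg fun j _ => sq_nonneg _
  have hz' : ∑ j, ‖z j‖ ^ 2 < 1 := hz
  have hw' : ∑ j, ‖w j‖ ^ 2 < 1 := hw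
  nlinarith [norm_nonneg (∑ j, z j * w j)]

lemma slit_of_norm_lt {s : ℂ} (h : ‖s‖ < 1) : 1 - s ∈ Complex.slitPlane := by
  left
  have : |s.re| ≤ ‖s‖ := Complex.abs_re_le_norm s
  simp only [Complex.sub_re, Complex.one_re]
  cases abs_le.mp this with
  | intro h1 h2 => linarith

lemma one_sub_ne_zero {s : ℂ} (h : ‖s‖ < 1) : (1:ℂ) - s ≠ 0 := by
  intro h0
  have : s = 1 := by linear_combination -h0
  rw [this] at h; norm_num at h

lemma one_sub_log_ne_zero {s : ℂ} (h : ‖s‖ < 1) :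
    (1:ℂ) - Complex.log (1 - s) ≠ 0 := by
  intro h0
  have hlog : Complex.log (1 - s) = 1 := by linear_combination -h0
  have hexp : (1 : ℂ) - s = Complex.exp 1 := by
    rw [← Complex.exp_log (one_sub_ne_zero h), hlog]
  have h2 : ‖(1:ℂ) - s‖ ≤ 1 + ‖s‖ := by
    calc ‖(1:ℂ) - s‖ ≤ ‖(1:ℂ)‖ + ‖s‖ := norm_sub_le _ _
    _ = 1 + ‖s‖ := by norm_num
  have h3 : ‖Complex.exp 1‖ = Real.exp 1 := by
    rw [Complex.norm_exp]; norm_num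
  have := Real.exp_one_gt_d9
  rw [hexp, h3] at h2
  linarith

theorem stmt_0 (N : ℕ) (hN : 1 ≤ N)
    (ψ : (Fin N → ℂ) → ℂ) (φ : (Fin N → ℂ) → Fin N → ℂ)
    (hψ : DifferentiableOn ℂ ψ (unitBall N))
    (hφ : DifferentiableOn ℂ φ (unitBall N))
    (hmap : ∀ z ∈ unitBall N, φ z ∈ unitBall N)
    (hψ0 : ψ 0 ≠ 0)
    (hstar : ∀ z ∈ unitBall N, ∀ w ∈ unitBall N,
      ψ z * (1 - Complex.log (1 - ∑ j, φ z j * w j)) =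
        ψ w * (1 - Complex.log (1 - ∑ j, z j * φ w j))) :
    (∀ z ∈ unitBall N,
        ψ z = ψ 0 * (1 - Complex.log (1 - ∑ k, z k * φ 0 k))) ∧
      ∀ k : Fin N, ∀ z ∈ unitBall N,
        φ z k = φ 0 k +
          (∑ j, jac0 N φ j k * z j) /
            ((1 - ∑ m, z m * φ 0 m) *
              (1 - Complex.log (1 - ∑ m, z m * φ 0 m))) := by
  have hopen := isOpen_unitBall N
  have h0 := zero_mem_unitBall N
  have hn0 : unitBall N ∈ nhds (0 : Fin N → ℂ) := hopen.mem_nhds h0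
  have part1 : ∀ z ∈ unitBall N,
      ψ z = ψ 0 * (1 - Complex.log (1 - ∑ k, z k * φ 0 k)) := by
    intro z hz
    have := hstar z hz 0 h0
    simpa using this
  refine ⟨part1, fun k z hz => ?_⟩
  have hφ0 : φ 0 ∈ unitBall N := hmap 0 h0
  have hza : ‖∑ m, z m * φ 0 m‖ < 1 := pair_norm_lt N hz hφ0
  have h1a : (1:ℂ) - ∑ m, z m * φ 0 m ≠ 0 := one_sub_ne_zero hza
  have hB : (1:ℂ) - Complex.log (1 - ∑ m, z m * φ 0 m) ≠ 0 := one_sub_log_ne_zero hza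
  have hφd : HasFDerivAt φ (fderiv ℂ φ 0) 0 := (hφ.differentiableAt hn0).hasFDerivAt
  have hslit1 : (1:ℂ) ∈ Complex.slitPlane := by
    simpa using slit_of_norm_lt (s := 0) (by norm_num)
  -- LHS derivative
  have hLu : HasFDerivAt (fun w : Fin N → ℂ => (1:ℂ) - ∑ j, φ z j * w j)
      (-(linMap N (φ z))) 0 := (hasFDerivAt_linSum N (φ z) 0).const_sub 1
  have hLlog : HasFDerivAt (fun w : Fin N → ℂ =>
      Complex.log ((1:ℂ) - ∑ j, φ z j * w j)) ((1:ℂ)⁻¹ • -(linMap N (φ z))) 0 := by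
    have := (Complex.hasDerivAt_log hslit1).comp_hasFDerivAt_of_eq 0 hLu (by simp)
    simpa [Function.comp_def] using this
  have hL : HasFDerivAt (fun w : Fin N → ℂ =>
      ψ z * ((1:ℂ) - Complex.log ((1:ℂ) - ∑ j, φ z j * w j)))
      (ψ z • -((1:ℂ)⁻¹ • -(linMap N (φ z)))) 0 := (hLlog.const_sub 1).const_mul (ψ z)
  -- RHS first factor
  have hfsum : HasFDerivAt (fun w : Fin N → ℂ => ∑ j, w j * φ 0 j) (linMap N (φ 0)) 0 := by
    have h : (fun w : Fin N → ℂ => ∑ j, w j * φ 0 j) = fun w => ∑ j, φ 0 j * w j := by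
      funext w; exact Finset.sum_congr rfl fun j _ => mul_comm _ _
    rw [h]; exact hasFDerivAt_linSum N (φ 0) 0
  have hflog : HasFDerivAt (fun w : Fin N → ℂ =>
      Complex.log ((1:ℂ) - ∑ j, w j * φ 0 j)) ((1:ℂ)⁻¹ • -(linMap N (φ 0))) 0 := by
    have := (Complex.hasDerivAt_log hslit1).comp_hasFDerivAt_of_eq 0
      (hfsum.const_sub 1) (by simp)
    simpa [Function.comp_def] using this
  have hf : HasFDerivAt (fun w : Fin N → ℂ =>
      ψ 0 * ((1:ℂ) - Complex.log ((1:ℂ) - ∑ j, w j * φ 0 j)))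
      (ψ 0 • -((1:ℂ)⁻¹ • -(linMap N (φ 0)))) 0 := (hflog.const_sub 1).const_mul (ψ 0)
  -- RHS second factor
  have hh : HasFDerivAt (fun w : Fin N → ℂ => ∑ j, z j * φ w j)
      ((linMap N z).comp (fderiv ℂ φ 0)) 0 := by
    have hcomp := ((linMap N z).hasFDerivAt (x := φ 0)).comp 0 hφd
    exact hcomp.congr_of_eventuallyEq
      (Filter.Eventually.of_forall fun w => (linMap_apply N z (φ w)).symm)
  have hglog : HasFDerivAt (fun w : Fin N → ℂ =>
      Complex.log ((1:ℂ) - ∑ j, z j * φ w j))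
      (((1:ℂ) - ∑ m, z m * φ 0 m)⁻¹ • -((linMap N z).comp (fderiv ℂ φ 0))) 0 := by
    have := (Complex.hasDerivAt_log (slit_of_norm_lt hza)).comp_hasFDerivAt_of_eq 0
      (hh.const_sub 1) rfl
    simpa [Function.comp_def] using this
  have hg : HasFDerivAt (fun w : Fin N → ℂ =>
      (1:ℂ) - Complex.log ((1:ℂ) - ∑ j, z j * φ w j))
      (-(((1:ℂ) - ∑ m, z m * φ 0 m)⁻¹ • -((linMap N z).comp (fderiv ℂ φ 0)))) 0 :=
    hglog.const_sub 1
  have hR := hf.mul hg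
  have hEq : (fun w : Fin N → ℂ => ψ z * ((1:ℂ) - Complex.log ((1:ℂ) - ∑ j, φ z j * w j)))
      =ᶠ[nhds (0 : Fin N → ℂ)]
      (fun w : Fin N → ℂ =>
        (ψ 0 * ((1:ℂ) - Complex.log ((1:ℂ) - ∑ j, w j * φ 0 j))) *
          ((1:ℂ) - Complex.log ((1:ℂ) - ∑ j, z j * φ w j))) := by
    filter_upwards [hn0] with w hw
    rw [hstar z hz w hw, part1 w hw]
  have hL2 := hR.congr_of_eventuallyEq hEq
  have heqd := hL.unique hL2
  have hkey := ContinuousLinearMap.ext_iff.mp heqd (Pi.single k 1)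
  simp only [linMap_apply, ContinuousLinearMap.add_apply, ContinuousLinearMap.smul_apply,
    ContinuousLinearMap.neg_apply, ContinuousLinearMap.coe_comp', Function.comp_apply,
    smul_eq_mul, Finset.mul_sum, Pi.zero_apply, zero_mul, Finset.sum_const_zero, sub_zero,
    Complex.log_one, Pi.single_apply, mul_ite, mul_one, mul_zero, Finset.sum_ite_eq',
    Finset.mem_univ, if_true, one_mul, neg_neg, inv_one, mul_neg, neg_mul] at hkey
  rw [part1 z hz] at hkey
  have hjac : (∑ j, jac0 N φ j k * z j) = ∑ j, z j * fderiv ℂ φ 0 (Pi.single k 1) j :=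
    Finset.sum_congr rfl fun j _ => mul_comm _ _
  rw [hjac]
  have hsum : ∑ i, ψ 0 * ((1 - ∑ m, z m * φ 0 m)⁻¹ * (z i * fderiv ℂ φ 0 (Pi.single k 1) i))
      = ψ 0 * (1 - ∑ m, z m * φ 0 m)⁻¹ * ∑ i, z i * fderiv ℂ φ 0 (Pi.single k 1) i := by
    rw [Finset.mul_sum]; exact Finset.sum_congr rfl fun i _ => by ring
  rw [hsum] at hkey
  field_simp at hkey
  have h2 : ψ 0 * ((1 - Complex.log (1 - ∑ m, z m * φ 0 m)) * φ z k * (1 - ∑ m, z m * φ 0 m)) =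
      ψ 0 * ((∑ i, z i * fderiv ℂ φ 0 (Pi.single k 1) i) +
        (1 - Complex.log (1 - ∑ m, z m * φ 0 m)) * φ 0 k * (1 - ∑ m, z m * φ 0 m)) := by
    linear_combination ψ 0 * hkey
  have h3 := mul_left_cancel₀ hψ0 h2
  rw [← sub_eq_iff_eq_add', eq_div_iff (mul_ne_zero h1a hB)]
  linear_combination h3
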